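/- For a stratified Lie algebra g of nilpotency step s, the following are equivalent: (b) V_s ⊆ i for every nontrivial ideal i of g; (c) dim Z(g) = 1, where Z(g) is the center of g. -/

import Mathlib

/-- The span of all brackets `⁅x, y⁆` with `x ∈ A` and `y ∈ B`. -/
def lieSpan {L : Type} [LieRing L] [LieAlgebra ℝ L] (A B : Submodule ℝ L) :
    Submodule ℝ L :=
  Submodule.span ℝ {z : L | ∃ x ∈ A, ∃ y ∈ B, z = ⁅x, y⁆}

/-- A stratification of step `s` on a Lie algebra `L`: a decomposition
`L = V 1 ⊕ ⋯ ⊕ V s` (the direct sum being recorded by spanning and independence)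
with `[V 1, V j] = V (j+1)` for `1 ≤ j < s`, `[V 1, V s] = 0` and `V s ≠ 0`.
Layers of index `0` or `> s` are trivial. -/
structure IsStratified (L : Type) [LieRing L] [LieAlgebra ℝ L]
    (s : ℕ) (V : ℕ → Submodule ℝ L) : Prop where
  pos : 0 < s
  last_ne_bot : V s ≠ ⊥
  zero_bot : V 0 = ⊥
  gt_bot : ∀ j, s < j → V j = ⊥
  iSup_eq_top : (⨆ j, V j) = ⊤
  indep : ∀ j, Disjoint (V j) (⨆ k, ⨆ _ : k ≠ j, V k)
  layer : ∀ j, 1 ≤ j → j < s → lieSpan (V 1) (V j) = V (j + 1)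
  last : lieSpan (V 1) (V s) = ⊥

variable {L : Type} [LieRing L] [LieAlgebra ℝ L]

lemma strat_bracket_one {s : ℕ} {V : ℕ → Submodule ℝ L} (hst : IsStratified L s V)
    {j : ℕ} (hj : 1 ≤ j) {x y : L} (hx : x ∈ V 1) (hy : y ∈ V j) :
    ⁅x, y⁆ ∈ V (j + 1) := by
  rcases lt_trichotomy j s with h | h | h
  · rw [← hst.layer j hj h]
    exact Submodule.subset_span ⟨x, hx, y, hy, rfl⟩
  · subst h
    have hz : ⁅x, y⁆ ∈ lieSpan (V j) (V j) ⊔ lieSpan (V 1) (V j) := by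
      exact Submodule.mem_sup_right (Submodule.subset_span ⟨x, hx, y, hy, rfl⟩)
    have h0 : ⁅x, y⁆ ∈ (⊥ : Submodule ℝ L) := by
      have := hst.last
      rw [← this]
      exact Submodule.subset_span ⟨x, hx, y, hy, rfl⟩
    simp only [Submodule.mem_bot] at h0
    rw [h0]; exact zero_mem _
  · have : y = 0 := by
      have := hst.gt_bot j h
      rw [this] at hy
      simpa using hy
    rw [this, lie_zero]; exact zero_mem _

lemma strat_bracket {s : ℕ} {V : ℕ → Submodule ℝ L} (hst : IsStratified L s V) :
    ∀ i, 1 ≤ i → ∀ j, 1 ≤ j → ∀ x ∈ V i, ∀ y ∈ V j, ⁅x, y⁆ ∈ V (i + j) := by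
  intro i
  induction i with
  | zero => omega
  | succ i ih =>
    intro _ j hj x hx y hy
    rcases Nat.lt_or_ge i 1 with h1 | h1
    · interval_cases i
      simpa [add_comm] using strat_bracket_one hst hj hx hy
    · rcases Nat.lt_or_ge i s with his | his
      · rw [← hst.layer i h1 his] at hx
        induction hx using Submodule.span_induction with
        | mem z hz =>
          obtain ⟨a, ha, b, hb, rfl⟩ := hz
          rw [lie_lie]
          have t1 : ⁅a, ⁅b, y⁆⁆ ∈ V (i + j + 1) :=
            strat_bracket_one hst (by omega) ha (ih h1 j hj b hb y hy)
          have t2 : ⁅b, ⁅a, y⁆⁆ ∈ V (i + (j + 1)) :=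
            ih h1 (j + 1) (by omega) b hb _ (strat_bracket_one hst hj ha hy)
          have h3 : i + 1 + j = i + j + 1 := by omega
          rw [h3]
          exact sub_mem t1 (by simpa [Nat.add_assoc] using t2)
        | zero => simp
        | add u v hu hv hu' hv' => simpa [add_lie] using add_mem hu' hv'
        | smul a u hu hu' => simpa [smul_lie] using Submodule.smul_mem _ a hu'
      · have hx0 : x = 0 := by
          have := hst.gt_bot (i + 1) (by omega)
          rw [this] at hx; simpa using hx
        rw [hx0, zero_lie]; exact zero_mem _

lemma strat_last_le_center {s : ℕ} {V : ℕ → Submodule ℝ L} (hst : IsStratified L s V) :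
    V s ≤ (LieAlgebra.center ℝ L : LieSubmodule ℝ L L).toSubmodule := by
  intro z hz
  rw [LieSubmodule.mem_toSubmodule, LieModule.mem_maxTrivSubmodule]
  intro x
  have hx : x ∈ (⨆ j, V j) := by rw [hst.iSup_eq_top]; trivial
  refine Submodule.iSup_induction (motive := fun w => ⁅w, z⁆ = 0) _ hx
    (fun i w hw => ?_) (by simp) (fun u v hu hv => by simp [add_lie, hu, hv])
  rcases Nat.eq_zero_or_pos i with rfl | hi
  · rw [hst.zero_bot] at hw
    simp only [Submodule.mem_bot] at hw
    simp [hw]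
  · have := strat_bracket hst i hi s hst.pos w hw z hz
    rw [hst.gt_bot (i + s) (by omega)] at this
    simpa using this

/-- `T k = ⨆ j ≥ k, V j`. -/
private def Tsub (V : ℕ → Submodule ℝ L) (k : ℕ) : Submodule ℝ L :=
  ⨆ j, ⨆ _ : k ≤ j, V j

lemma strat_V_le_T {V : ℕ → Submodule ℝ L} {k j : ℕ} (h : k ≤ j) : V j ≤ Tsub V k :=
  le_iSup_of_le j (le_iSup (fun _ : k ≤ j => V j) h)

lemma strat_bracket_T {s : ℕ} {V : ℕ → Submodule ℝ L} (hst : IsStratified L s V)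
    {k : ℕ} (hk : 1 ≤ k) (x : L) {m : L} (hm : m ∈ Tsub V k) :
    ⁅x, m⁆ ∈ Tsub V (k + 1) := by
  have hx : x ∈ (⨆ j, V j) := by rw [hst.iSup_eq_top]; trivial
  refine Submodule.iSup_induction (motive := fun w => ⁅w, m⁆ ∈ Tsub V (k + 1)) _ hx
    (fun i w hw => ?_) (by simp) (fun u v hu hv => by simpa [add_lie] using add_mem hu hv)
  rcases Nat.eq_zero_or_pos i with rfl | hi
  · rw [hst.zero_bot] at hw
    simp only [Submodule.mem_bot] at hw
    simp [hw]
  · refine Submodule.iSup_induction (motive := fun n => ⁅w, n⁆ ∈ Tsub V (k + 1)) _ hm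
      (fun j p hp => ?_) (by simp) (fun u v hu hv => by simpa [lie_add] using add_mem hu hv)
    by_cases hkj : k ≤ j
    · rw [iSup_pos hkj] at hp
      exact strat_V_le_T (by omega)
        (strat_bracket hst i hi j (by omega) w hw p hp)
    · rw [iSup_neg hkj] at hp
      simp only [Submodule.mem_bot] at hp
      simp [hp]

lemma strat_lcs_le {s : ℕ} {V : ℕ → Submodule ℝ L} (hst : IsStratified L s V) (k : ℕ) :
    (LieModule.lowerCentralSeries ℝ L L k).toSubmodule ≤ Tsub V (k + 1) := by
  induction k with
  | zero =>
    intro x _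
    have hx : x ∈ (⨆ j, V j) := by rw [hst.iSup_eq_top]; trivial
    refine Submodule.iSup_induction (motive := fun w => w ∈ Tsub V (0 + 1)) _ hx
      (fun i w hw => ?_) (by simp) (fun u v hu hv => add_mem hu hv)
    rcases Nat.eq_zero_or_pos i with rfl | hi
    · rw [hst.zero_bot] at hw
      simp only [Submodule.mem_bot] at hw
      simp [hw]
    · exact strat_V_le_T hi hw
  | succ k ih =>
    rw [LieModule.lowerCentralSeries_succ, LieSubmodule.lieIdeal_oper_eq_linear_span']
    rw [Submodule.span_le]
    rintro _ ⟨x, -, n, hn, rfl⟩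
    exact strat_bracket_T hst (by omega) x (ih hn)

lemma strat_isNilpotent {s : ℕ} {V : ℕ → Submodule ℝ L} (hst : IsStratified L s V) :
    LieModule.IsNilpotent L L := by
  rw [LieModule.isNilpotent_iff ℝ]
  refine ⟨s, ?_⟩
  rw [LieSubmodule.eq_bot_iff]
  intro m hm
  have h1 : m ∈ Tsub V (s + 1) := strat_lcs_le hst s hm
  have h2 : Tsub V (s + 1) = ⊥ := by
    apply le_bot_iff.mp
    refine iSup_le fun j => iSup_le fun hj => ?_
    rw [hst.gt_bot j (by omega)]
  rw [h2] at h1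
  simpa using h1

lemma strat_exists_central_mem_ideal (hnil : LieModule.IsNilpotent L L)
    (I : LieIdeal ℝ L) (hI : I ≠ ⊥) :
    ∃ z : L, z ≠ 0 ∧ z ∈ I ∧ ∀ x : L, ⁅x, z⁆ = 0 := by
  have hI' : (I : LieSubmodule ℝ L L) ≠ ⊥ := hI
  haveI : Nontrivial (I : LieSubmodule ℝ L L) :=
    (LieSubmodule.nontrivial_iff_ne_bot (N := (I : LieSubmodule ℝ L L))).mpr hI'
  haveI : LieModule.IsNilpotent L (I : LieSubmodule ℝ L L) := by
    rw [LieSubmodule.isNilpotent_iff_exists_lcs_eq_bot]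
    obtain ⟨k, hk⟩ := (LieModule.isNilpotent_iff ℝ L L).mp hnil
    refine ⟨k, le_bot_iff.mp ?_⟩
    have hmono : LieSubmodule.lcs k (I : LieSubmodule ℝ L L) ≤
        LieSubmodule.lcs k (⊤ : LieSubmodule ℝ L L) := by
      have h2 := LieSubmodule.lcs_sup (N₁ := (I : LieSubmodule ℝ L L))
        (N₂ := (⊤ : LieSubmodule ℝ L L)) (k := k)
      rw [sup_top_eq] at h2
      rw [h2]
      exact le_sup_left
    exact le_trans hmono (le_of_eq hk)
  haveI := LieModule.nontrivial_max_triv_of_isNilpotent ℝ L (I : LieSubmodule ℝ L L)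
  obtain ⟨t, ht⟩ :=
    exists_ne (0 : LieModule.maxTrivSubmodule ℝ L (I : LieSubmodule ℝ L L))
  refine ⟨(((t : (I : LieSubmodule ℝ L L)) : L)), ?_, (t : (I : LieSubmodule ℝ L L)).2, ?_⟩
  · intro h0
    apply ht
    ext
    exact h0
  · intro x
    have := (LieModule.mem_maxTrivSubmodule ℝ L (I : LieSubmodule ℝ L L)
      (t : (I : LieSubmodule ℝ L L))).mp t.2 x
    have h2 : ((⁅x, (t : (I : LieSubmodule ℝ L L))⁆ : (I : LieSubmodule ℝ L L)) : L)
        = ⁅x, ((t : (I : LieSubmodule ℝ L L)) : L)⁆ :=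
      LieSubmodule.coe_bracket _ x (t : (I : LieSubmodule ℝ L L))
    rw [this] at h2
    simpa using h2.symm

/-- The span of a central element is a Lie ideal. -/
def centralIdeal (z : L) (hz : ∀ x : L, ⁅x, z⁆ = 0) : LieIdeal ℝ L :=
  { Submodule.span ℝ {z} with
    lie_mem := fun {x m} hm => by
      obtain ⟨a, rfl⟩ := Submodule.mem_span_singleton.mp hm
      have : ⁅x, a • z⁆ = (0 : L) := by rw [lie_smul, hz, smul_zero]
      rw [this]
      exact (Submodule.span ℝ {z}).zero_mem }

lemma centralIdeal_ne_bot {z : L} (hz : ∀ x : L, ⁅x, z⁆ = 0) (h0 : z ≠ 0) :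
    centralIdeal z hz ≠ ⊥ := by
  intro h
  apply h0
  have hmem : z ∈ centralIdeal z hz := Submodule.mem_span_singleton_self z
  rw [h] at hmem
  exact (LieSubmodule.mem_bot z).mp hmem

lemma centralIdeal_toSubmodule {z : L} (hz : ∀ x : L, ⁅x, z⁆ = 0) :
    (centralIdeal z hz).toSubmodule = Submodule.span ℝ {z} := rfl

/-- For a stratified Lie algebra `g` of nilpotency step `s`, the following are
equivalent: (b) `V s ⊆ i` for every nontrivial ideal `i` of `g`;
(c) `dim Z(g) = 1`, where `Z(g)` is the center of `g`. -/
theorem stratified_last_layer_in_ideals_iff_center_one_dimensional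
    (L : Type) [LieRing L] [LieAlgebra ℝ L] [FiniteDimensional ℝ L]
    (s : ℕ) (V : ℕ → Submodule ℝ L) (hst : IsStratified L s V) :
    (∀ I : LieIdeal ℝ L, I ≠ ⊥ → V s ≤ I.toSubmodule) ↔
      Module.finrank ℝ ↥(LieAlgebra.center ℝ L) = 1 := by
  have hnil : LieModule.IsNilpotent L L := strat_isNilpotent hst
  set Z := (LieAlgebra.center ℝ L : LieSubmodule ℝ L L).toSubmodule with hZdef
  have hfr : Module.finrank ℝ ↥(LieAlgebra.center ℝ L) = Module.finrank ℝ Z := rfl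
  have hVZ : V s ≤ Z := strat_last_le_center hst
  have hmemZ : ∀ z : L, z ∈ Z ↔ ∀ x : L, ⁅x, z⁆ = 0 := by
    intro z
    rw [hZdef, LieSubmodule.mem_toSubmodule, LieModule.mem_maxTrivSubmodule]
  obtain ⟨v, hv, hv0⟩ := Submodule.exists_mem_ne_zero_of_ne_bot hst.last_ne_bot
  constructor
  · -- (b) → (c)
    intro h
    have hvc : ∀ x : L, ⁅x, v⁆ = 0 := (hmemZ v).mp (hVZ hv)
    have hVle : V s ≤ Submodule.span ℝ {v} :=
      h (centralIdeal v hvc) (centralIdeal_ne_bot hvc hv0)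
    have hVeq : V s = Submodule.span ℝ {v} :=
      le_antisymm hVle ((Submodule.span_singleton_le_iff_mem v _).mpr hv)
    have hVfr : Module.finrank ℝ (V s) = 1 := by
      rw [hVeq]; exact finrank_span_singleton hv0
    have hZV : Z ≤ V s := by
      intro z hz
      rcases eq_or_ne z 0 with rfl | hz0
      · exact zero_mem _
      · have hzc : ∀ x : L, ⁅x, z⁆ = 0 := (hmemZ z).mp hz
        have h1 : V s ≤ Submodule.span ℝ {z} :=
          h (centralIdeal z hzc) (centralIdeal_ne_bot hzc hz0)
        have h2 : V s = Submodule.span ℝ {z} := by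
          apply Submodule.eq_of_le_of_finrank_le h1
          rw [hVfr, finrank_span_singleton hz0]
        rw [h2]
        exact Submodule.mem_span_singleton_self z
    have : Z = V s := le_antisymm hZV hVZ
    rw [hfr, this, hVfr]
  · -- (c) → (b)
    intro hc I hI
    have h1 : Module.finrank ℝ Z = 1 := by rw [← hfr]; exact hc
    have hVfr1 : 1 ≤ Module.finrank ℝ (V s) := by
      have := Submodule.finrank_mono ((Submodule.span_singleton_le_iff_mem v _).mpr hv)
      rwa [finrank_span_singleton hv0] at this
    have hVZeq : V s = Z :=
      Submodule.eq_of_le_of_finrank_le hVZ (by rw [h1]; exact hVfr1)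
    have hVfr : Module.finrank ℝ (V s) = 1 := by rw [hVZeq, h1]
    obtain ⟨z, hz0, hzI, hzc⟩ := strat_exists_central_mem_ideal hnil I hI
    have hzV : z ∈ V s := by rw [hVZeq]; exact (hmemZ z).mpr hzc
    have h2 : Submodule.span ℝ {z} = V s := by
      apply Submodule.eq_of_le_of_finrank_le
      · exact (Submodule.span_singleton_le_iff_mem z _).mpr hzV
      · rw [finrank_span_singleton hz0, hVfr]
    rw [← h2]
    rw [Submodule.span_le]
    intro w hw
    rw [Set.mem_singleton_iff] at hw
    subst hw
    exact hzI
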